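/- Let Γ be a finite connected oriented graph. A proper subgraph Λ of Γ is maximal among proper A-complete subgraphs if and only if either (i) Λ is connected and is obtained from Γ by deleting one vertex together with all edges incident to it, or (ii) Λ has exactly two connected components and is obtained from Γ by deleting a simple disconnecting set, i.e., a set of edges each of which joins the two components; equivalently, in case (ii) the vertex set of Γ is partitioned into two nonempty parts V₁, V₂ whose induced subgraphs are connected and Λ is obtained by deleting all edges between V₁ and V₂. -/

import Mathlib

/-- The underlying simple graph of the subgraph of an oriented graph given by the
set of edges `A` (adjacency through edges in `A`). -/
def graphSub {Vt E : Type*} (ini fin : E → Vt) (A : Set E) : SimpleGraph Vt where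
  Adj v w := v ≠ w ∧ ∃ a ∈ A, s(ini a, fin a) = s(v, w)
  symm := ⟨by
    rintro v w ⟨h, a, ha, ha'⟩
    exact ⟨h.symm, a, ha, ha'.trans (Sym2.eq_swap)⟩⟩
  loopless := ⟨fun v h => h.1 rfl⟩

/-- The vector `x_a = e_{f(a)} - e_{i(a)}` associated to an edge `a`. -/
def edgeVec {Vt E : Type*} [DecidableEq Vt] (ini fin : E → Vt) (a : E) : Vt → ℝ :=
  Pi.single (fin a) 1 - Pi.single (ini a) 1

/-- The vertex set of the subgraph with edge set `A`: all endpoints of edges of `A`. -/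
def vertexSet {Vt E : Type*} (ini fin : E → Vt) (A : Set E) : Set Vt :=
  {v | ∃ a ∈ A, v = ini a ∨ v = fin a}

/-- The subgraph with edge set `A` is connected: any two of its vertices are
joined by a path through edges of `A`. -/
def EdgeConnected {Vt E : Type*} (ini fin : E → Vt) (A : Set E) : Prop :=
  ∀ a ∈ A, ∀ b ∈ A, (graphSub ini fin A).Reachable (ini a) (ini b)

/-- The subgraph with edge set `A` is A-complete:
`span {x_a : a ∈ A} ∩ Δ_Γ = {x_a : a ∈ A}`. -/
def IsAComplete {Vt E : Type*} [DecidableEq Vt] (ini fin : E → Vt) (A : Set E) : Prop :=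
  (Submodule.span ℝ (edgeVec ini fin '' A) : Set (Vt → ℝ)) ∩
      Set.range (edgeVec ini fin) = edgeVec ini fin '' A

/-- The underlying simple graph of the whole oriented graph. -/
def graphOf {Vt E : Type*} (ini fin : E → Vt) : SimpleGraph Vt :=
  graphSub ini fin Set.univ

section Aux
variable {Vt E : Type*} [Fintype Vt] [DecidableEq Vt] (ini fin : E → Vt)

lemma graphSub_mono {A B : Set E} (h : A ⊆ B) : graphSub ini fin A ≤ graphSub ini fin B := by
  rintro u v ⟨hne, a, ha, hs⟩
  exact ⟨hne, a, h ha, hs⟩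

lemma graphSub_le (A : Set E) : graphSub ini fin A ≤ graphOf ini fin :=
  graphSub_mono ini fin (Set.subset_univ A)

lemma adj_of_mem {A : Set E} {a : E} (ha : a ∈ A) (hne : ini a ≠ fin a) :
    (graphSub ini fin A).Adj (ini a) (fin a) := ⟨hne, a, ha, rfl⟩

lemma graphOf_adj {u v : Vt} :
    (graphOf ini fin).Adj u v ↔ (u ≠ v ∧ ∃ a : E, s(ini a, fin a) = s(u, v)) := by
  unfold graphOf graphSub
  simp

lemma single_sub_mem_span {A : Set E} : ∀ {u v : Vt},
    (graphSub ini fin A).Reachable u v →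
    (Pi.single v 1 - Pi.single u 1 : Vt → ℝ) ∈ Submodule.span ℝ (edgeVec ini fin '' A) := by
  intro u v h
  obtain ⟨p⟩ := h
  induction p with
  | nil => simpa using Submodule.zero_mem _
  | @cons u w v h p ih =>
    obtain ⟨hne, a, ha, hs⟩ := h
    have hstep : (Pi.single w 1 - Pi.single u 1 : Vt → ℝ) ∈
        Submodule.span ℝ (edgeVec ini fin '' A) := by
      rcases Sym2.eq_iff.mp hs with ⟨h1, h2⟩ | ⟨h1, h2⟩
      · have hsp := Submodule.subset_span (R := ℝ) (Set.mem_image_of_mem (edgeVec ini fin) ha)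
        rw [edgeVec, h1, h2] at hsp
        exact hsp
      · have hsp := Submodule.subset_span (R := ℝ) (Set.mem_image_of_mem (edgeVec ini fin) ha)
        rw [edgeVec, h1, h2] at hsp
        have := Submodule.neg_mem _ hsp
        simpa using this
    have := Submodule.add_mem _ ih hstep
    simpa using this

lemma reach_of_mem_span {A : Set E} {b : E}
    (hb : edgeVec ini fin b ∈ Submodule.span ℝ (edgeVec ini fin '' A)) :
    (graphSub ini fin A).Reachable (ini b) (fin b) := by
  classical
  set S : Finset Vt :=
    Finset.univ.filter (fun v => (graphSub ini fin A).Reachable (ini b) v) with hS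
  have hmemS : ∀ v, v ∈ S ↔ (graphSub ini fin A).Reachable (ini b) v := by
    intro v; simp [hS]
  let φ : (Vt → ℝ) →ₗ[ℝ] ℝ :=
    { toFun := fun f => ∑ v ∈ S, f v
      map_add' := by intro f g; simp [Finset.sum_add_distrib]
      map_smul' := by intro c f; simp [Finset.mul_sum] }
  have hsingle : ∀ w : Vt, φ (Pi.single w 1) = if w ∈ S then 1 else 0 := by
    intro w
    simp only [φ, LinearMap.coe_mk, AddHom.coe_mk, Pi.single_apply]
    exact Finset.sum_ite_eq' S w (fun _ => 1)
  have hker : Submodule.span ℝ (edgeVec ini fin '' A) ≤ LinearMap.ker φ := by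
    rw [Submodule.span_le]
    rintro x ⟨a, ha, rfl⟩
    have hiff : ini a ∈ S ↔ fin a ∈ S := by
      by_cases hne : ini a = fin a
      · rw [hne]
      · constructor
        · intro h
          exact (hmemS _).mpr (((hmemS _).mp h).trans (adj_of_mem ini fin ha hne).reachable)
        · intro h
          exact (hmemS _).mpr (((hmemS _).mp h).trans
            (adj_of_mem ini fin ha hne).symm.reachable)
    simp only [SetLike.mem_coe, LinearMap.mem_ker, edgeVec, map_sub, hsingle]
    by_cases h1 : ini a ∈ S
    · rw [if_pos h1, if_pos (hiff.mp h1)]; ring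
    · rw [if_neg h1, if_neg (fun h => h1 (hiff.mpr h))]; ring
  have h0 : φ (edgeVec ini fin b) = 0 := hker hb
  have hini : ini b ∈ S := (hmemS _).mpr (SimpleGraph.Reachable.refl _)
  rw [edgeVec, map_sub, hsingle, hsingle, if_pos hini] at h0
  by_cases hfin : fin b ∈ S
  · exact (hmemS _).mp hfin
  · rw [if_neg hfin] at h0; norm_num at h0

end Aux

section Aux2
variable {Vt E : Type*} [Fintype Vt] [DecidableEq Vt] (ini fin : E → Vt)

lemma edgeVec_inj (hloop : ∀ a, ini a ≠ fin a)
    (hsimple : Function.Injective fun a => s(ini a, fin a)) :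
    Function.Injective (edgeVec ini fin) := by
  intro a b h
  have hfa := congrFun h (fin a)
  have hia := congrFun h (ini a)
  simp only [edgeVec, Pi.sub_apply, Pi.single_apply, if_true, eq_self_iff_true] at hfa hia
  rw [if_neg (fun hh => hloop a hh.symm)] at hfa
  rw [if_neg (hloop a)] at hia
  have h1 : fin a = fin b := by by_contra hne; rw [if_neg hne] at hfa; split_ifs at hfa <;> norm_num at hfa
  have h2 : ini a = ini b := by
    by_contra hne; rw [if_neg hne] at hia; split_ifs at hia <;> norm_num at hia
  exact hsimple (by simp only [h1, h2])

lemma mem_image_edgeVec (hloop : ∀ a, ini a ≠ fin a)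
    (hsimple : Function.Injective fun a => s(ini a, fin a)) {A : Set E} {b : E} :
    edgeVec ini fin b ∈ edgeVec ini fin '' A ↔ b ∈ A := by
  constructor
  · rintro ⟨a, ha, hab⟩
    rwa [← edgeVec_inj ini fin hloop hsimple hab]
  · exact fun h => ⟨b, h, rfl⟩

lemma isAComplete_iff (hloop : ∀ a, ini a ≠ fin a)
    (hsimple : Function.Injective fun a => s(ini a, fin a)) (A : Set E) :
    IsAComplete ini fin A ↔
      ∀ b, (graphSub ini fin A).Reachable (ini b) (fin b) → b ∈ A := by
  constructor
  · intro h b hb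
    have hmem : edgeVec ini fin b ∈
        (Submodule.span ℝ (edgeVec ini fin '' A) : Set (Vt → ℝ)) ∩
          Set.range (edgeVec ini fin) :=
      ⟨single_sub_mem_span ini fin hb, ⟨b, rfl⟩⟩
    rw [h] at hmem
    exact (mem_image_edgeVec ini fin hloop hsimple).mp hmem
  · intro h
    apply Set.Subset.antisymm
    · rintro x ⟨hx1, b, rfl⟩
      exact (mem_image_edgeVec ini fin hloop hsimple).mpr (h b (reach_of_mem_span ini fin hx1))
    · intro x hx
      exact ⟨Submodule.subset_span hx, by rcases hx with ⟨a, _, rfl⟩; exact ⟨a, rfl⟩⟩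

/-- Walks in the subgraph of internal edges of a bipartition don't cross. -/
lemma bipart_reach_pres (W : Set Vt) {u v : Vt}
    (h : (graphSub ini fin
      {a | (ini a ∈ W ∧ fin a ∈ W) ∨ (ini a ∉ W ∧ fin a ∉ W)}).Reachable u v) :
    (u ∈ W ↔ v ∈ W) := by
  obtain ⟨p⟩ := h
  induction p with
  | nil => rfl
  | @cons u w v h p ih =>
    refine Iff.trans ?_ ih
    obtain ⟨hne, a, ha, hs⟩ := h
    rcases Sym2.eq_iff.mp hs with ⟨h1, h2⟩ | ⟨h1, h2⟩ <;> rcases ha with ⟨ha1, ha2⟩ | ⟨ha1, ha2⟩ <;>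
      rw [← h1, ← h2] <;> simp [ha1, ha2]

lemma bipart_complete (hloop : ∀ a, ini a ≠ fin a)
    (hsimple : Function.Injective fun a => s(ini a, fin a)) (W : Set Vt) :
    IsAComplete ini fin {a | (ini a ∈ W ∧ fin a ∈ W) ∨ (ini a ∉ W ∧ fin a ∉ W)} := by
  rw [isAComplete_iff ini fin hloop hsimple]
  intro b hb
  have := bipart_reach_pres ini fin W hb
  by_cases h : ini b ∈ W
  · exact Or.inl ⟨h, this.mp h⟩
  · exact Or.inr ⟨h, fun hf => h (this.mpr hf)⟩

/-- In a connected graph, any nonempty proper vertex set has a crossing edge. -/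
lemma crossing_edge (hconn : (graphOf ini fin).Connected) {W : Set Vt}
    (h1 : W.Nonempty) (h2 : Wᶜ.Nonempty) :
    ∃ c, ¬((ini c ∈ W ∧ fin c ∈ W) ∨ (ini c ∉ W ∧ fin c ∉ W)) := by
  obtain ⟨u, hu⟩ := h1
  obtain ⟨v, hv⟩ := h2
  have hr : (graphOf ini fin).Reachable u v := hconn.preconnected u v
  obtain ⟨p⟩ := hr
  -- find adjacent pair crossing W
  have key : ∀ {x y : Vt} (p : (graphOf ini fin).Walk x y), x ∈ W → y ∉ W →
      ∃ s t, (graphOf ini fin).Adj s t ∧ s ∈ W ∧ t ∉ W := by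
    intro x y p
    induction p with
    | nil => intro hx hy; exact absurd hx hy
    | @cons x w y h p ih =>
      intro hx hy
      by_cases hw : w ∈ W
      · exact ih hw hy
      · exact ⟨x, w, h, hx, hw⟩
  obtain ⟨s, t, hadj, hsW, htW⟩ := key p hu hv
  obtain ⟨hne, c, hs⟩ := (graphOf_adj ini fin).mp hadj
  refine ⟨c, ?_⟩
  rcases Sym2.eq_iff.mp hs with ⟨e1, e2⟩ | ⟨e1, e2⟩
  · rw [e1, e2]; tauto
  · rw [e1, e2]; tauto

/-- Transfer reachability in `graphSub A` to the induced graph on a set closed under `A`. -/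
lemma reach_induce {A : Set E} {W : Set Vt}
    (hclosed : ∀ a ∈ A, (ini a ∈ W ↔ fin a ∈ W)) :
    ∀ {u v : Vt} (_ : (graphSub ini fin A).Walk u v) (hu : u ∈ W) (hv : v ∈ W),
      ((graphOf ini fin).induce W).Reachable ⟨u, hu⟩ ⟨v, hv⟩ := by
  intro u v p
  induction p with
  | nil => intro hu hv; exact SimpleGraph.Reachable.refl _
  | @cons u w v h p ih =>
    intro hu hv
    have hadj : (graphOf ini fin).Adj u w := graphSub_le ini fin A h
    have hwW : w ∈ W := by
      obtain ⟨hne, a, ha, hs⟩ := h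
      rcases Sym2.eq_iff.mp hs with ⟨e1, e2⟩ | ⟨e1, e2⟩
      · rw [← e2]; rw [← e1] at hu; exact (hclosed a ha).mp hu
      · rw [← e1]; rw [← e2] at hu; exact (hclosed a ha).mpr hu
    have : ((graphOf ini fin).induce W).Adj ⟨u, hu⟩ ⟨w, hwW⟩ := hadj
    exact this.reachable.trans (ih hwW hv)

/-- Transfer reachability in the induced graph to `graphSub A` when all internal
edges belong to `A`. -/
lemma induce_reach {A : Set E} {W : Set Vt}
    (hint : ∀ a, ini a ∈ W → fin a ∈ W → a ∈ A) :
    ∀ {x y : W} (_ : ((graphOf ini fin).induce W).Walk x y),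
      (graphSub ini fin A).Reachable x.1 y.1 := by
  intro x y p
  induction p with
  | nil => exact SimpleGraph.Reachable.refl _
  | @cons x w y h p ih =>
    obtain ⟨hne, a, hs⟩ := (graphOf_adj ini fin).mp h
    have haA : a ∈ A := by
      rcases Sym2.eq_iff.mp hs with ⟨e1, e2⟩ | ⟨e1, e2⟩
      · exact hint a (e1 ▸ x.2) (e2 ▸ w.2)
      · exact hint a (e1 ▸ w.2) (e2 ▸ x.2)
    have hadj : (graphSub ini fin A).Adj x.1 w.1 := ⟨hne, a, haA, hs⟩
    exact hadj.reachable.trans ih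

end Aux2

section Aux3
variable {Vt E : Type*} [Fintype Vt] [DecidableEq Vt] (ini fin : E → Vt)

lemma back (hloop : ∀ a, ini a ≠ fin a)
    (hsimple : Function.Injective fun a => s(ini a, fin a))
    (hconn : (graphOf ini fin).Connected) (V₁ V₂ : Set Vt)
    (h1 : V₁.Nonempty) (h2 : V₂.Nonempty) (hdisj : Disjoint V₁ V₂)
    (hcover : V₁ ∪ V₂ = Set.univ)
    (hc1 : ((graphOf ini fin).induce V₁).Connected)
    (hc2 : ((graphOf ini fin).induce V₂).Connected) :
    IsAComplete ini fin {a | (ini a ∈ V₁ ∧ fin a ∈ V₁) ∨ (ini a ∈ V₂ ∧ fin a ∈ V₂)} ∧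
      ∀ A' : Set E, IsAComplete ini fin A' →
        {a | (ini a ∈ V₁ ∧ fin a ∈ V₁) ∨ (ini a ∈ V₂ ∧ fin a ∈ V₂)} ⊆ A' →
        A' ≠ Set.univ →
        A' = {a | (ini a ∈ V₁ ∧ fin a ∈ V₁) ∨ (ini a ∈ V₂ ∧ fin a ∈ V₂)} := by
  classical
  set A : Set E := {a | (ini a ∈ V₁ ∧ fin a ∈ V₁) ∨ (ini a ∈ V₂ ∧ fin a ∈ V₂)} with hA
  have hV2 : ∀ v, v ∈ V₂ ↔ v ∉ V₁ := by
    intro v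
    constructor
    · intro h hv; exact Set.disjoint_left.mp hdisj hv h
    · intro h
      have hv : v ∈ V₁ ∪ V₂ := by rw [hcover]; trivial
      exact hv.resolve_left h
  have hAeq2 : A = {a | (ini a ∈ V₁ ∧ fin a ∈ V₁) ∨ (ini a ∉ V₁ ∧ fin a ∉ V₁)} := by
    rw [hA]; ext a; simp only [Set.mem_setOf_eq, hV2]
  have hcomp : IsAComplete ini fin A := by
    rw [hAeq2]; exact bipart_complete ini fin hloop hsimple V₁
  refine ⟨hcomp, ?_⟩
  intro A' hA'c hsub hne
  have hr1 : ∀ u v, u ∈ V₁ → v ∈ V₁ → (graphSub ini fin A').Reachable u v := by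
    intro u v hu hv
    obtain ⟨p⟩ := hc1.preconnected ⟨u, hu⟩ ⟨v, hv⟩
    have hrA := induce_reach ini fin (A := A)
      (fun a ha hb => (Or.inl ⟨ha, hb⟩ : a ∈ A)) p
    exact SimpleGraph.Reachable.mono (graphSub_mono ini fin hsub) hrA
  have hr2 : ∀ u v, u ∈ V₂ → v ∈ V₂ → (graphSub ini fin A').Reachable u v := by
    intro u v hu hv
    obtain ⟨p⟩ := hc2.preconnected ⟨u, hu⟩ ⟨v, hv⟩
    have hrA := induce_reach ini fin (A := A)
      (fun a ha hb => (Or.inr ⟨ha, hb⟩ : a ∈ A)) p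
    exact SimpleGraph.Reachable.mono (graphSub_mono ini fin hsub) hrA
  have htot : ∀ v : Vt, v ∈ V₁ ∨ v ∈ V₂ := by
    intro v
    have hv : v ∈ V₁ ∪ V₂ := by rw [hcover]; trivial
    exact hv
  have hcross : ∀ c ∈ A', c ∈ A := by
    by_contra hnc
    push_neg at hnc
    obtain ⟨c, hcA', hcnA⟩ := hnc
    obtain ⟨x, y, hx, hy, hadj⟩ :
        ∃ x y, x ∈ V₁ ∧ y ∈ V₂ ∧ (graphSub ini fin A').Adj x y := by
      have hadj0 : (graphSub ini fin A').Adj (ini c) (fin c) := ⟨hloop c, c, hcA', rfl⟩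
      rcases htot (ini c) with hi | hi <;> rcases htot (fin c) with hf | hf
      · exact absurd (Or.inl ⟨hi, hf⟩ : c ∈ A) hcnA
      · exact ⟨ini c, fin c, hi, hf, hadj0⟩
      · exact ⟨fin c, ini c, hf, hi, hadj0.symm⟩
      · exact absurd (Or.inr ⟨hi, hf⟩ : c ∈ A) hcnA
    have br : ∀ u v, u ∈ V₁ → v ∈ V₂ → (graphSub ini fin A').Reachable u v := by
      intro u v hu hv
      exact (hr1 u x hu hx).trans (hadj.reachable.trans (hr2 y v hy hv))
    have hall : ∀ u v : Vt, (graphSub ini fin A').Reachable u v := by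
      intro u v
      rcases htot u with hu | hu <;> rcases htot v with hv | hv
      · exact hr1 u v hu hv
      · exact br u v hu hv
      · exact (br v u hv hu).symm
      · exact hr2 u v hu hv
    apply hne
    apply Set.eq_univ_of_forall
    intro e
    exact (isAComplete_iff ini fin hloop hsimple A').mp hA'c e (hall (ini e) (fin e))
  exact Set.Subset.antisymm hcross hsub

end Aux3

/-- for a connected oriented graph `Γ`, a proper subgraph (with
edge set `A ⊊ L`) is maximal among proper A-complete subgraphs iff either
(i) it is connected and obtained by deleting one vertex with all edges incident
to it, or (ii) it is obtained by deleting all edges between the two parts of a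
partition of the vertices into two nonempty parts with connected induced
subgraphs (a simple disconnecting set), so that it has two connected
components. -/
theorem stmt_12 {Vt E : Type*} [Fintype Vt] [DecidableEq Vt] [Fintype E]
    (ini fin : E → Vt) (hloop : ∀ a, ini a ≠ fin a)
    (hsimple : Function.Injective fun a => s(ini a, fin a))
    (hconn : (graphOf ini fin).Connected)
    (A : Set E) (hA : A ≠ Set.univ) :
    (IsAComplete ini fin A ∧
        ∀ A' : Set E, IsAComplete ini fin A' → A ⊆ A' → A' ≠ Set.univ → A' = A) ↔
      ((∃ v₀ : Vt, A = {a | ini a ≠ v₀ ∧ fin a ≠ v₀} ∧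
          ((graphOf ini fin).induce ({v₀}ᶜ : Set Vt)).Connected) ∨
        (∃ V₁ V₂ : Set Vt, V₁.Nonempty ∧ V₂.Nonempty ∧ Disjoint V₁ V₂ ∧
          V₁ ∪ V₂ = Set.univ ∧
          ((graphOf ini fin).induce V₁).Connected ∧
          ((graphOf ini fin).induce V₂).Connected ∧
          A = {a | (ini a ∈ V₁ ∧ fin a ∈ V₁) ∨ (ini a ∈ V₂ ∧ fin a ∈ V₂)})) := by
  classical
  constructor
  · rintro ⟨hAc, hmax⟩
    have hAc' := (isAComplete_iff ini fin hloop hsimple A).mp hAc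
    obtain ⟨b, hb⟩ : ∃ b, b ∉ A := by
      by_contra h
      push_neg at h
      exact hA (Set.eq_univ_of_forall h)
    set V₁ : Set Vt := {v | (graphSub ini fin A).Reachable (ini b) v} with hV₁
    have hinib : ini b ∈ V₁ := SimpleGraph.Reachable.refl _
    have hfinb : fin b ∉ V₁ := fun h => hb (hAc' b h)
    have hclosed : ∀ a ∈ A, (ini a ∈ V₁ ↔ fin a ∈ V₁) := by
      intro a ha
      by_cases hne : ini a = fin a
      · rw [hV₁]; simp only [Set.mem_setOf_eq]; rw [hne]
      constructor
      · intro h; exact h.trans (adj_of_mem ini fin ha hne).reachable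
      · intro h; exact h.trans (adj_of_mem ini fin ha hne).symm.reachable
    set A' : Set E := {a | (ini a ∈ V₁ ∧ fin a ∈ V₁) ∨ (ini a ∉ V₁ ∧ fin a ∉ V₁)} with hA'
    have hsub : A ⊆ A' := by
      intro a ha
      by_cases h : ini a ∈ V₁
      · exact Or.inl ⟨h, (hclosed a ha).mp h⟩
      · exact Or.inr ⟨h, fun hf => h ((hclosed a ha).mpr hf)⟩
    have hA'univ : A' ≠ Set.univ := by
      intro h
      have hbA : b ∈ A' := by rw [h]; trivial
      rcases hbA with ⟨_, h2⟩ | ⟨h1, _⟩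
      · exact hfinb h2
      · exact h1 hinib
    have hAeq : A' = A := hmax A' (bipart_complete ini fin hloop hsimple V₁) hsub hA'univ
    right
    refine ⟨V₁, V₁ᶜ, ⟨ini b, hinib⟩, ⟨fin b, hfinb⟩, disjoint_compl_right,
      Set.union_compl_self _, ?_, ?_, ?_⟩
    · -- induce V₁ connected
      haveI : Nonempty ↑V₁ := ⟨⟨ini b, hinib⟩⟩
      refine ⟨?_⟩
      rintro ⟨u, hu⟩ ⟨v, hv⟩
      obtain ⟨p⟩ := (hu : (graphSub ini fin A).Reachable (ini b) u).symm.trans hv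
      exact reach_induce ini fin hclosed p hu hv
    · -- induce V₁ᶜ connected
      haveI : Nonempty ↑(V₁ᶜ : Set Vt) := ⟨⟨fin b, hfinb⟩⟩
      refine ⟨?_⟩
      set V₂' : Set Vt := {v | ∃ h : v ∈ (V₁ᶜ : Set Vt),
          ((graphOf ini fin).induce (V₁ᶜ : Set Vt)).Reachable ⟨fin b, hfinb⟩ ⟨v, h⟩}
        with hV₂'
      have hfinb2 : fin b ∈ V₂' := ⟨hfinb, SimpleGraph.Reachable.refl _⟩
      have hsub2 : (V₁ᶜ : Set Vt) ⊆ V₂' := by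
        by_contra hns
        obtain ⟨w, hw2, hwn⟩ : ∃ w, w ∈ (V₁ᶜ : Set Vt) ∧ w ∉ V₂' := by
          rw [Set.not_subset] at hns
          exact hns
        set W : Set Vt := V₁ ∪ V₂' with hW
        set A3 : Set E := {a | (ini a ∈ W ∧ fin a ∈ W) ∨ (ini a ∉ W ∧ fin a ∉ W)} with hA3
        have hsubA3 : A ⊆ A3 := by
          intro a ha
          have haA' : a ∈ A' := hsub ha
          rcases haA' with ⟨hi, hf⟩ | ⟨hi, hf⟩
          · exact Or.inl ⟨Or.inl hi, Or.inl hf⟩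
          · -- both endpoints in V₁ᶜ
            have hadj : ((graphOf ini fin).induce (V₁ᶜ : Set Vt)).Adj ⟨ini a, hi⟩ ⟨fin a, hf⟩ :=
              (graphOf_adj ini fin).mpr ⟨hloop a, a, rfl⟩
            have hiff : ini a ∈ V₂' ↔ fin a ∈ V₂' := by
              constructor
              · rintro ⟨h', hr⟩
                exact ⟨hf, hr.trans hadj.reachable⟩
              · rintro ⟨h', hr⟩
                exact ⟨hi, hr.trans hadj.symm.reachable⟩
            by_cases h2' : ini a ∈ V₂'
            · exact Or.inl ⟨Or.inr h2', Or.inr (hiff.mp h2')⟩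
            · refine Or.inr ⟨?_, ?_⟩
              · rintro (h | h)
                · exact hi h
                · exact h2' h
              · rintro (h | h)
                · exact hf h
                · exact h2' (hiff.mpr h)
        have hA3univ : A3 ≠ Set.univ := by
          have hWne : W.Nonempty := ⟨ini b, Or.inl hinib⟩
          have hWcne : Wᶜ.Nonempty := by
            refine ⟨w, ?_⟩
            rintro (h | h)
            · exact hw2 h
            · exact hwn h
          obtain ⟨c, hc⟩ := crossing_edge ini fin hconn hWne hWcne
          intro h
          have hcA3 : c ∈ A3 := by rw [h]; trivial
          exact hc hcA3
        have hA3eq : A3 = A :=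
          hmax A3 (bipart_complete ini fin hloop hsimple W) hsubA3 hA3univ
        have hbA3 : b ∈ A3 := Or.inl ⟨Or.inl hinib, Or.inr hfinb2⟩
        rw [hA3eq] at hbA3
        exact hb hbA3
      rintro ⟨u, hu⟩ ⟨v, hv⟩
      obtain ⟨hu', hru⟩ := hsub2 hu
      obtain ⟨hv', hrv⟩ := hsub2 hv
      exact hru.symm.trans hrv
    · -- A = internal edges
      rw [← hAeq, hA']
      ext a
      simp only [Set.mem_setOf_eq, Set.mem_compl_iff]
  · rintro (⟨v₀, hA₀, hc⟩ | ⟨V₁, V₂, h1, h2, hdisj, hcover, hc1, hc2, hA₀⟩)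
    · obtain ⟨⟨u, hu⟩⟩ := hc.nonempty
      have hsconn : ((graphOf ini fin).induce ({v₀} : Set Vt)).Connected := by
        haveI : Nonempty ↑({v₀} : Set Vt) := ⟨⟨v₀, rfl⟩⟩
        refine ⟨?_⟩
        rintro ⟨x, hx⟩ ⟨y, hy⟩
        simp only [Set.mem_singleton_iff] at hx hy
        subst hx; subst hy
        rfl
      have hAeq : A = {a | (ini a ∈ ({v₀}ᶜ : Set Vt) ∧ fin a ∈ ({v₀}ᶜ : Set Vt)) ∨
          (ini a ∈ ({v₀} : Set Vt) ∧ fin a ∈ ({v₀} : Set Vt))} := by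
        rw [hA₀]; ext a
        simp only [Set.mem_setOf_eq, Set.mem_compl_iff, Set.mem_singleton_iff]
        constructor
        · rintro ⟨hx, hy⟩; exact Or.inl ⟨hx, hy⟩
        · rintro (⟨hx, hy⟩ | ⟨hx, hy⟩)
          · exact ⟨hx, hy⟩
          · exact absurd (hx.trans hy.symm) (hloop a)
      rw [hAeq]
      exact back ini fin hloop hsimple hconn ({v₀}ᶜ : Set Vt) ({v₀} : Set Vt)
        ⟨u, hu⟩ ⟨v₀, rfl⟩ disjoint_compl_left (Set.compl_union_self _) hc hsconn
    · rw [hA₀]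
      exact back ini fin hloop hsimple hconn V₁ V₂ h1 h2 hdisj hcover hc1 hc2
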